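/- arXiv:2507.17375 — 2 statements merged into one kernel-verified Lean document; each statement's English description precedes it below -/
import Mathlib

section
/- Let u : ℝ → ℝ be convex and define u⁺(t) = u(t) and u⁻(t) = u(−t) for t ≥ 0, with partial Legendre transforms û⁺(τ) = inf_{t ≥ 0}(u(t) − tτ) and û⁻(τ) = inf_{t ≥ 0}(u(−t) − tτ), and full transform û(τ) = inf_{t ∈ ℝ}(u(t) − tτ). Then for every τ ∈ ℝ: û⁺(τ) = sup_{σ ≥ τ} û(σ) and û⁻(τ) = sup_{σ ≤ −τ} û(σ). -/
private lemma slope_pair (u : ℝ → ℝ) (hconv : ConvexOn ℝ Set.univ u) (c : ℝ)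
    (hc0 : c ≤ u 0) {s t : ℝ} (hs : s < 0) (ht : 0 < t) :
    (u s - c) / s ≤ (u t - c) / t := by
  have hslope := hconv.slope_mono_adjacent (Set.mem_univ s) (Set.mem_univ t) hs ht
  -- hslope : (u 0 - u s) / (0 - s) ≤ (u t - u 0) / (t - 0)
  have h1 : (u 0 - u s) * t ≤ (u t - u 0) * (0 - s) := by
    have h0s : (0:ℝ) < 0 - s := by linarith
    rw [div_le_div_iff₀ h0s (by linarith : (0:ℝ) < t - 0)] at hslope
    nlinarith
  have key : (u t - c) * s ≤ (u s - c) * t := by nlinarith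
  rw [div_le_iff_of_neg hs, div_mul_eq_mul_div, div_le_iff₀ ht]
  exact key

private lemma exists_line (u : ℝ → ℝ) (hconv : ConvexOn ℝ Set.univ u) (τ c : ℝ)
    (h : ∀ t : ℝ, 0 ≤ t → c + t * τ ≤ u t) :
    ∃ σ : ℝ, τ ≤ σ ∧ ∀ t : ℝ, c + t * σ ≤ u t := by
  have hc0 : c ≤ u 0 := by have := h 0 le_rfl; linarith
  set S : Set ℝ := (fun s => (u s - c) / s) '' Set.Iio (0:ℝ) with hS
  set M := sSup S with hM
  have hne : S.Nonempty := ⟨_, ⟨-1, by norm_num, rfl⟩⟩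
  have hbdd : BddAbove S := by
    refine ⟨(u 1 - c) / 1, ?_⟩
    rintro x ⟨s, hs, rfl⟩
    exact slope_pair u hconv c hc0 hs one_pos
  refine ⟨max τ M, le_max_left _ _, fun t => ?_⟩
  rcases lt_trichotomy t 0 with ht | ht | ht
  · have hle : (u t - c) / t ≤ max τ M :=
      le_trans (le_csSup hbdd ⟨t, ht, rfl⟩) (le_max_right _ _)
    rw [div_le_iff_of_neg ht] at hle
    nlinarith
  · subst ht; simpa using hc0
  · have h1 : τ ≤ (u t - c) / t := by
      rw [le_div_iff₀ ht]; have := h t ht.le; nlinarith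
    have h2 : M ≤ (u t - c) / t := by
      refine csSup_le hne ?_
      rintro x ⟨s, hs, rfl⟩
      exact slope_pair u hconv c hc0 hs ht
    have hle : max τ M ≤ (u t - c) / t := max_le h1 h2
    rw [le_div_iff₀ ht] at hle
    nlinarith

private lemma aux (u : ℝ → ℝ) (hconv : ConvexOn ℝ Set.univ u) (τ : ℝ) :
    (⨅ t : {t : ℝ // 0 ≤ t}, ((u t.1 - t.1 * τ : ℝ) : EReal)) =
      ⨆ σ : {σ : ℝ // τ ≤ σ}, ⨅ t : ℝ, ((u t - t * σ.1 : ℝ) : EReal) := by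
  apply le_antisymm
  · by_contra hlt
    push_neg at hlt
    obtain ⟨c, hcB, hcA⟩ := EReal.exists_between_coe_real hlt
    have hforall : ∀ t : ℝ, 0 ≤ t → c + t * τ ≤ u t := by
      intro t ht
      have := hcA.trans_le (iInf_le _ (⟨t, ht⟩ : {t : ℝ // 0 ≤ t}))
      have := EReal.coe_lt_coe_iff.mp this
      linarith
    obtain ⟨σ, hστ, hσ⟩ := exists_line u hconv τ c hforall
    have : (c : EReal) ≤ ⨆ σ : {σ : ℝ // τ ≤ σ}, ⨅ t : ℝ, ((u t - t * σ.1 : ℝ) : EReal) := by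
      refine le_trans ?_ (le_iSup _ (⟨σ, hστ⟩ : {σ : ℝ // τ ≤ σ}))
      refine le_iInf fun t => EReal.coe_le_coe_iff.mpr ?_
      have := hσ t; linarith
    exact absurd (hcB.trans_le this) (lt_irrefl _)
  · refine iSup_le ?_
    rintro ⟨σ, hσ⟩
    refine le_iInf ?_
    rintro ⟨t, ht⟩
    refine (iInf_le _ t).trans (EReal.coe_le_coe_iff.mpr ?_)
    nlinarith [mul_le_mul_of_nonneg_left hσ ht]

/-- The Legendre transforms of the two rays of a convex function on `ℝ`
are the restricted suprema of the Legendre transform of the line. -/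
theorem legendre_rays_of_line (u : ℝ → ℝ)
    (hconv : ConvexOn ℝ Set.univ u)
    (uhat uhatp uhatm : ℝ → EReal)
    (huhat : ∀ τ : ℝ, uhat τ = ⨅ t : ℝ, ((u t - t * τ : ℝ) : EReal))
    (huhatp : ∀ τ : ℝ, uhatp τ = ⨅ t : {t : ℝ // 0 ≤ t}, ((u t.1 - t.1 * τ : ℝ) : EReal))
    (huhatm : ∀ τ : ℝ, uhatm τ = ⨅ t : {t : ℝ // 0 ≤ t}, ((u (-t.1) - t.1 * τ : ℝ) : EReal)) :
    ∀ τ : ℝ,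
      uhatp τ = (⨆ σ : {σ : ℝ // τ ≤ σ}, uhat σ.1) ∧
      uhatm τ = (⨆ σ : {σ : ℝ // σ ≤ -τ}, uhat σ.1) := by
  intro τ
  constructor
  · rw [huhatp τ]
    simp_rw [huhat]
    exact aux u hconv τ
  · rw [huhatm τ]
    simp_rw [huhat]
    have hconv' : ConvexOn ℝ Set.univ (fun t => u (-t)) := by
      refine ⟨convex_univ, fun x _ y _ a b ha hb hab => ?_⟩
      have := hconv.2 (Set.mem_univ (-x)) (Set.mem_univ (-y)) ha hb hab
      simpa [neg_add, mul_neg, add_comm] using this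
    have h1 := aux (fun t => u (-t)) hconv' τ
    rw [h1]
    have inner : ∀ σ : ℝ, (⨅ t : ℝ, ((u (-t) - t * σ : ℝ) : EReal)) =
        ⨅ t : ℝ, ((u t - t * (-σ) : ℝ) : EReal) := by
      intro σ
      apply le_antisymm
      · refine le_iInf fun t => (iInf_le _ (-t)).trans_eq ?_
        norm_num
      · refine le_iInf fun t => (iInf_le _ (-t)).trans_eq ?_
        norm_num
    simp_rw [inner]
    apply le_antisymm
    · refine iSup_le ?_
      rintro ⟨σ, hσ⟩
      refine le_iSup_of_le (⟨-σ, by linarith⟩ : {σ : ℝ // σ ≤ -τ}) (le_of_eq ?_)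
      simp
    · refine iSup_le ?_
      rintro ⟨σ, hσ⟩
      refine le_iSup_of_le (⟨-σ, by linarith⟩ : {σ : ℝ // τ ≤ σ}) (le_of_eq ?_)
      simp
end

section
/- Let φ₀, ψ₀, φ₁, ψ₁ ∈ ℝ and define f, g : ℝ → [−∞,∞) by f(τ) = (1−τ)φ₀ + τψ₀ for τ ∈ [0,1] (−∞ else) and g(τ) = (1−τ)φ₁ + τψ₁ for τ ∈ [0,1] (−∞ else). Then the supremal convolution h(τ) = sup_σ (f(τ−σ) + g(σ)) equals: (1−τ)(φ₀+φ₁) + τ·max(φ₀+ψ₁, φ₁+ψ₀) for 0 ≤ τ ≤ 1, (τ−1)(ψ₀+ψ₁) + (2−τ)·max(φ₀+ψ₁, φ₁+ψ₀) for 1 ≤ τ ≤ 2, and −∞ for τ ∉ [0,2]. -/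
/-- Supremal convolution of two affine-on-`[0,1]` concave functions. -/
theorem sup_convolution_affine (φ₀ ψ₀ φ₁ ψ₁ : ℝ) (f g h : ℝ → EReal)
    (hf : ∀ τ : ℝ, f τ = if τ ∈ Set.Icc (0 : ℝ) 1
        then (((1 - τ) * φ₀ + τ * ψ₀ : ℝ) : EReal) else ⊥)
    (hg : ∀ τ : ℝ, g τ = if τ ∈ Set.Icc (0 : ℝ) 1
        then (((1 - τ) * φ₁ + τ * ψ₁ : ℝ) : EReal) else ⊥)
    (hh : ∀ τ : ℝ, h τ = ⨆ σ : ℝ, (f (τ - σ) + g σ)) :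
    (∀ τ ∈ Set.Icc (0 : ℝ) 1,
        h τ = (((1 - τ) * (φ₀ + φ₁) + τ * max (φ₀ + ψ₁) (φ₁ + ψ₀) : ℝ) : EReal)) ∧
    (∀ τ ∈ Set.Icc (1 : ℝ) 2,
        h τ = (((τ - 1) * (ψ₀ + ψ₁) + (2 - τ) * max (φ₀ + ψ₁) (φ₁ + ψ₀) : ℝ) : EReal)) ∧
    (∀ τ : ℝ, τ ∉ Set.Icc (0 : ℝ) 2 → h τ = ⊥) := by
  refine ⟨?_, ?_, ?_⟩
  · intro τ hτ
    obtain ⟨hτ0, hτ1⟩ := hτ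
    rw [hh]
    apply le_antisymm
    · apply iSup_le
      intro σ
      rw [hf, hg]
      by_cases h1 : τ - σ ∈ Set.Icc (0 : ℝ) 1
      · by_cases h2 : σ ∈ Set.Icc (0 : ℝ) 1
        · rw [if_pos h1, if_pos h2, ← EReal.coe_add, EReal.coe_le_coe_iff]
          obtain ⟨ha, hb⟩ := h1
          obtain ⟨hc, hd⟩ := h2
          rcases le_total (φ₀ + ψ₁) (φ₁ + ψ₀) with hle | hle
          · rw [max_eq_right hle]
            nlinarith [mul_nonneg hc (sub_nonneg.2 hle)]
          · rw [max_eq_left hle]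
            nlinarith [mul_nonneg ha (sub_nonneg.2 hle)]
        · simp [h2]
      · simp [h1]
    · rcases le_total (φ₀ + ψ₁) (φ₁ + ψ₀) with hle | hle
      · refine le_trans ?_ (le_iSup (fun σ => f (τ - σ) + g σ) 0)
        simp only [sub_zero]
        rw [hf, hg, if_pos (Set.mem_Icc.2 ⟨hτ0, hτ1⟩),
          if_pos (Set.mem_Icc.2 ⟨le_refl 0, zero_le_one⟩),
          ← EReal.coe_add, EReal.coe_le_coe_iff, max_eq_right hle]
        nlinarith
      · refine le_trans ?_ (le_iSup (fun σ => f (τ - σ) + g σ) τ)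
        simp only [sub_self]
        rw [hf, hg, if_pos (Set.mem_Icc.2 ⟨le_refl 0, zero_le_one⟩),
          if_pos (Set.mem_Icc.2 ⟨hτ0, hτ1⟩),
          ← EReal.coe_add, EReal.coe_le_coe_iff, max_eq_left hle]
        nlinarith
  · intro τ hτ
    obtain ⟨hτ1, hτ2⟩ := hτ
    rw [hh]
    apply le_antisymm
    · apply iSup_le
      intro σ
      rw [hf, hg]
      by_cases h1 : τ - σ ∈ Set.Icc (0 : ℝ) 1
      · by_cases h2 : σ ∈ Set.Icc (0 : ℝ) 1
        · rw [if_pos h1, if_pos h2, ← EReal.coe_add, EReal.coe_le_coe_iff]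
          obtain ⟨ha, hb⟩ := h1
          obtain ⟨hc, hd⟩ := h2
          rcases le_total (φ₀ + ψ₁) (φ₁ + ψ₀) with hle | hle
          · rw [max_eq_right hle]
            nlinarith [mul_nonneg (sub_nonneg.2 hb) (sub_nonneg.2 hle)]
          · rw [max_eq_left hle]
            nlinarith [mul_nonneg (sub_nonneg.2 hd) (sub_nonneg.2 hle)]
        · simp [h2]
      · simp [h1]
    · rcases le_total (φ₀ + ψ₁) (φ₁ + ψ₀) with hle | hle
      · refine le_trans ?_ (le_iSup (fun σ => f (τ - σ) + g σ) (τ - 1))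
        have hts : τ - (τ - 1) = 1 := by ring
        rw [hts, hf, hg, if_pos (Set.mem_Icc.2 ⟨zero_le_one, le_refl 1⟩),
          if_pos (Set.mem_Icc.2 ⟨by linarith, by linarith⟩),
          ← EReal.coe_add, EReal.coe_le_coe_iff, max_eq_right hle]
        nlinarith
      · refine le_trans ?_ (le_iSup (fun σ => f (τ - σ) + g σ) 1)
        rw [hf, hg, if_pos (Set.mem_Icc.2 ⟨by linarith, by linarith⟩),
          if_pos (Set.mem_Icc.2 ⟨zero_le_one, le_refl 1⟩),
          ← EReal.coe_add, EReal.coe_le_coe_iff, max_eq_left hle]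
        nlinarith
  · intro τ hτ
    rw [Set.mem_Icc, not_and_or, not_le, not_le] at hτ
    rw [hh]
    refine le_bot_iff.1 (iSup_le fun σ => ?_)
    rw [hf, hg]
    by_cases h2 : σ ∈ Set.Icc (0 : ℝ) 1
    · obtain ⟨hc, hd⟩ := h2
      have h1 : τ - σ ∉ Set.Icc (0 : ℝ) 1 := by
        rw [Set.mem_Icc, not_and_or, not_le, not_le]
        rcases hτ with ht | ht
        · left; linarith
        · right; linarith
      simp [h1]
    · simp [h2]
end
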